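/- Let E = A ⋈ V be a bicrossed product of perm algebras, identify A with A ⋈ {0}, and let V' be any perm subalgebra complement of A in E (E = A ⊕ V' as vector spaces). Write v = α(v) + β(v) for v ∈ V with α : V → A, β : V → V' the components of the decomposition E = A ⊕ V'. Then −α is a deformation map of the matched pair (A, V, ⇀, ↼, ⊳, ⊲), and β : V_{−α} → V' is an isomorphism of perm algebras, where V_{−α} has multiplication v1·_{−α}v2 = v1·v2 − α(v1)⇀v2 − v1↼α(v2). -/
import Mathlib


/-- The bicrossed-product multiplication on `A × V` attached to `(⇀, ↼, ⊳, ⊲)`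
(here `l = ⇀`, `r = ↼`, `s = ⊳`, `t = ⊲`). -/
def bicrossedMul {k A V : Type*} [Field k] [AddCommGroup A] [Module k A]
    [AddCommGroup V] [Module k V]
    (mulA : A →ₗ[k] A →ₗ[k] A) (mulV : V →ₗ[k] V →ₗ[k] V)
    (l : A →ₗ[k] V →ₗ[k] V) (r : V →ₗ[k] A →ₗ[k] V)
    (s : V →ₗ[k] A →ₗ[k] A) (t : A →ₗ[k] V →ₗ[k] A) :
    A × V → A × V → A × V :=
  fun p q =>
    (mulA p.1 q.1 + s p.2 q.1 + t p.1 q.2, mulV p.2 q.2 + l p.1 q.2 + r p.2 q.1)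

/-- Let `E = A ⋈ V` be a bicrossed product of perm algebras, and let `V'` be a perm
subalgebra complement of `A` (identified with `A ⋈ {0}`) in `E`.  Decompose each
`v ∈ V ⊆ E` as `v = α(v) + β(v)` with `α(v) ∈ A`, `β(v) ∈ V'`.  Then `−α` is a
deformation map of the matched pair, and `β : V_{−α} → V'` is an isomorphism of perm
algebras, where `V_{−α}` carries the product
`v₁ ·_{−α} v₂ = v₁·v₂ + (−α)(v₁)⇀v₂ + v₁↼(−α)(v₂)`. -/
theorem complement_is_deformation {k A V : Type*} [Field k] [AddCommGroup A] [Module k A]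
    [AddCommGroup V] [Module k V]
    (mulA : A →ₗ[k] A →ₗ[k] A)
    (hpA1 : ∀ x y z, mulA (mulA x y) z = mulA x (mulA y z))
    (hpA2 : ∀ x y z, mulA x (mulA y z) = mulA x (mulA z y))
    (mulV : V →ₗ[k] V →ₗ[k] V)
    (hpV1 : ∀ x y z, mulV (mulV x y) z = mulV x (mulV y z))
    (hpV2 : ∀ x y z, mulV x (mulV y z) = mulV x (mulV z y))
    (l : A →ₗ[k] V →ₗ[k] V) (r : V →ₗ[k] A →ₗ[k] V)
    (s : V →ₗ[k] A →ₗ[k] A) (t : A →ₗ[k] V →ₗ[k] A)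
    -- matched pair: the bicrossed product is a perm algebra
    (hmp : ∀ x y z : A × V,
      bicrossedMul mulA mulV l r s t (bicrossedMul mulA mulV l r s t x y) z =
        bicrossedMul mulA mulV l r s t x (bicrossedMul mulA mulV l r s t y z) ∧
      bicrossedMul mulA mulV l r s t x (bicrossedMul mulA mulV l r s t y z) =
        bicrossedMul mulA mulV l r s t x (bicrossedMul mulA mulV l r s t z y))
    -- V' is a perm subalgebra of E = A ⋈ V
    (V' : Submodule k (A × V))
    (hV' : ∀ x ∈ V', ∀ y ∈ V', bicrossedMul mulA mulV l r s t x y ∈ V')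
    -- V' is a complement of A ≅ A ⋈ {0} in E
    (hcompl : Submodule.prod (⊤ : Submodule k A) (⊥ : Submodule k V) ⊔ V' = ⊤ ∧
              Submodule.prod (⊤ : Submodule k A) (⊥ : Submodule k V) ⊓ V' = ⊥)
    -- the components of the decomposition v = α(v) + β(v)
    (α : V →ₗ[k] A) (β : V →ₗ[k] V')
    (hdec : ∀ v : V, ((0 : A), v) = ((α v, (0 : V)) : A × V) + ((β v : A × V))) :
    -- (1) −α is a deformation map of the matched pair
    (∀ v1 v2 : V,
      (-α) (mulV v1 v2) - mulA ((-α) v1) ((-α) v2) =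
        s v1 ((-α) v2) + t ((-α) v1) v2 -
          (-α) (l ((-α) v1) v2) - (-α) (r v1 ((-α) v2))) ∧
    -- (2) β : V_{−α} → V' is an isomorphism of perm algebras
    Function.Bijective β ∧
    (∀ v1 v2 : V,
      ((β (mulV v1 v2 + l ((-α) v1) v2 + r v1 ((-α) v2)) : A × V)) =
        bicrossedMul mulA mulV l r s t ((β v1 : A × V)) ((β v2 : A × V))) := by

  have hβ : ∀ v : V, ((β v : A × V)) = (-α v, v) := by
    intro v
    have h := hdec v
    have h2 : ((β v : A × V)) = ((0 : A), v) - ((α v, (0 : V)) : A × V) := by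
      rw [h]; abel
    rw [h2, Prod.mk_sub_mk]; simp
  have hzero : ∀ x : A × V, x ∈ V' → x.2 = 0 → x = 0 := by
    intro x hx h2
    have hx' : x ∈ Submodule.prod (⊤ : Submodule k A) (⊥ : Submodule k V) := by
      simp [Submodule.mem_prod, h2]
    have hmem : x ∈ Submodule.prod (⊤ : Submodule k A) (⊥ : Submodule k V) ⊓ V' := ⟨hx', hx⟩
    rw [hcompl.2] at hmem
    simpa using hmem
  have hmain : ∀ v1 v2 : V,
      ((β (mulV v1 v2 + l ((-α) v1) v2 + r v1 ((-α) v2)) : A × V)) =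
        bicrossedMul mulA mulV l r s t ((β v1 : A × V)) ((β v2 : A × V)) := by
    intro v1 v2
    set w := mulV v1 v2 + l ((-α) v1) v2 + r v1 ((-α) v2) with hw
    have hprod : bicrossedMul mulA mulV l r s t (β v1 : A × V) (β v2 : A × V) ∈ V' :=
      hV' _ (β v1).2 _ (β v2).2
    have hdiff : bicrossedMul mulA mulV l r s t (β v1 : A × V) (β v2 : A × V)
        - ((β w : A × V)) ∈ V' := sub_mem hprod (β w).2
    have hdiff2 : (bicrossedMul mulA mulV l r s t (β v1 : A × V) (β v2 : A × V)
        - ((β w : A × V))).2 = 0 := by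
      simp only [Prod.snd_sub, hβ, bicrossedMul, hw, LinearMap.neg_apply]
      abel
    have h0 := hzero _ hdiff hdiff2
    rw [sub_eq_zero] at h0
    exact h0.symm
  refine ⟨?_, ⟨?_, ?_⟩, hmain⟩
  · intro v1 v2
    have h1 := congrArg Prod.fst (hmain v1 v2)
    simp only [bicrossedMul, LinearMap.neg_apply, map_add, map_neg, Submodule.coe_add,
      Submodule.coe_neg, hβ, Prod.fst_add, Prod.fst_neg] at h1 ⊢
    linear_combination (norm := module) h1
  · intro v1 v2 h
    have h1 : ((β v1 : A × V)) = ((β v2 : A × V)) := by rw [h]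
    rw [hβ, hβ, Prod.mk.injEq] at h1
    exact h1.2
  · intro x
    refine ⟨(x : A × V).2, ?_⟩
    have hd : (x : A × V) - ((β (x : A × V).2 : A × V)) ∈ V' :=
      sub_mem x.2 (β (x : A × V).2).2
    have hd2 : ((x : A × V) - ((β (x : A × V).2 : A × V))).2 = 0 := by
      rw [Prod.snd_sub, hβ]; simp
    have h0 := hzero _ hd hd2
    rw [sub_eq_zero] at h0
    exact Subtype.ext h0.symm
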